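/- Let α : Fin n → ℝ and let H_α be the n×n complex Hermitian matrix with (H_α)_{j, j+1} = exp(i·α(j)), (H_α)_{j+1, j} = exp(-i·α(j)) for indices taken modulo n, and all other entries zero (the Hermitian adjacency matrix of an oriented n-cycle). If the sum of all α(j) is π (so the product of the weights around the cycle is -1) and n = 2m is even, then the characteristic polynomial of H_α equals the characteristic polynomial of the adjacency matrix of the undirected n-cycle plus the constant 4. -/

import Mathlib

open Complex

/-- The Hermitian adjacency matrix of an oriented `n`-cycle: the arc from `j` to `j+1`
(modulo `n`) receives weight `exp(i α j)`, and the reverse arc its conjugate. -/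
noncomputable def cycleH (n : ℕ) (α : Fin n → ℝ) : Matrix (Fin n) (Fin n) ℂ :=
  fun j k =>
    (if (k : ℕ) = ((j : ℕ) + 1) % n then Complex.exp (Complex.I * (α j)) else 0) +
    (if (j : ℕ) = ((k : ℕ) + 1) % n then Complex.exp (-(Complex.I * (α k))) else 0)

/-- The adjacency matrix of the undirected `n`-cycle, over `ℂ`. -/
def cycleAdj (n : ℕ) : Matrix (Fin n) (Fin n) ℂ :=
  fun j k =>
    (if (k : ℕ) = ((j : ℕ) + 1) % n then 1 else 0) +
    (if (j : ℕ) = ((k : ℕ) + 1) % n then 1 else 0)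

open Matrix Polynomial

lemma eval_charpoly' {n : ℕ} (M : Matrix (Fin n) (Fin n) ℂ) (x : ℂ) :
    (M.charpoly).eval x = det (x • (1 : Matrix (Fin n) (Fin n) ℂ) - M) := by
  rw [Matrix.charpoly, ← Polynomial.coe_evalRingHom, RingHom.map_det]
  congr 1
  ext i j
  by_cases h : i = j <;>
    simp [h, Matrix.charmatrix_apply, Matrix.one_apply, Matrix.diagonal_apply]

lemma exists_u (x : ℂ) : ∃ u : ℂ, u ≠ 0 ∧ u + u⁻¹ = x := by
  obtain ⟨u, hu⟩ := IsAlgClosed.exists_root (k := ℂ) (C 1 * X ^ 2 + C (-x) * X + C 1)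
    (by rw [Polynomial.degree_quadratic one_ne_zero]; norm_num)
  have h : u ^ 2 - x * u + 1 = 0 := by
    have := hu
    simp [Polynomial.IsRoot, Polynomial.eval_add, Polynomial.eval_mul] at this
    linear_combination this
  have hu0 : u ≠ 0 := by
    intro h0
    rw [h0] at h
    norm_num at h
  refine ⟨u, hu0, ?_⟩
  field_simp
  linear_combination h

/-- cyclic shift matrix -/
def shiftS (n : ℕ) [NeZero n] : Matrix (Fin n) (Fin n) ℂ :=
  fun j k => if k = j + 1 then 1 else 0

lemma shiftS_mul_transpose (n : ℕ) [NeZero n] : shiftS n * (shiftS n)ᵀ = 1 := by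
  ext j k
  simp only [Matrix.mul_apply, shiftS, Matrix.transpose_apply, ite_mul, one_mul, zero_mul]
  rw [Finset.sum_ite_eq' Finset.univ (j+1) (fun l => if l = k + 1 then (1:ℂ) else 0)]
  simp [Matrix.one_apply, add_left_inj, eq_comm]

lemma transpose_mul_shiftS (n : ℕ) [NeZero n] : (shiftS n)ᵀ * shiftS n = 1 := by
  ext j k
  simp only [Matrix.mul_apply, shiftS, Matrix.transpose_apply, ite_mul, one_mul, zero_mul]
  have : ∀ l : Fin n, (if j = l + 1 then if k = l + 1 then (1:ℂ) else 0 else 0)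
      = if l = j - 1 then (if k = j then (1:ℂ) else 0) else 0 := by
    intro l
    by_cases h : j = l + 1
    · subst h; simp [eq_comm, add_left_inj]
    · simp only [if_neg h, eq_comm (a := l)]
      rw [if_neg]
      · intro h2
        exact h (by rw [← h2]; exact (sub_add_cancel j 1).symm)
  simp only [this]
  rw [Finset.sum_ite_eq' Finset.univ (j-1)]
  simp [Matrix.one_apply, eq_comm]

lemma fin_add_one_val {n : ℕ} [NeZero n] (a : Fin n) : ((a + 1 : Fin n) : ℕ) = ((a : ℕ) + 1) % n := by
  rw [Fin.val_add, Fin.val_one']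
  rcases Nat.lt_or_ge 1 n with h | h
  · rw [Nat.mod_eq_of_lt h]
  · interval_cases n
    · exact absurd rfl (NeZero.ne 0)
    · omega

lemma det_zsub_shiftS (N : ℕ) (hN : 1 ≤ N) (z : ℂ) :
    det (z • (1 : Matrix (Fin (N+1)) (Fin (N+1)) ℂ) - shiftS (N+1)) = z ^ (N+1) - 1 := by
  set A : Matrix (Fin (N+1)) (Fin (N+1)) ℂ := z • 1 - shiftS (N+1) with hA
  have hone : ((1 : Fin (N+1)) : ℕ) = 1 := by
    rw [Fin.val_one', Nat.mod_eq_of_lt (by omega)]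
  have hAapp : ∀ j k : Fin (N+1), A j k =
      (if j = k then z else 0) - (if (k:ℕ) = ((j:ℕ)+1) % (N+1) then 1 else 0) := by
    intro j k
    have : (k = j + 1) ↔ ((k:ℕ) = ((j:ℕ)+1) % (N+1)) := by
      rw [Fin.ext_iff, fin_add_one_val]
    simp [hA, shiftS, Matrix.sub_apply, Matrix.smul_apply, Matrix.one_apply, this]
  rw [Matrix.det_succ_column_zero]
  have hzero : ∀ i : Fin (N+1), i ∉ ({0, Fin.last N} : Finset (Fin (N+1))) →
      ((-1:ℂ) ^ (i:ℕ) * A i 0 * det (A.submatrix i.succAbove Fin.succ)) = 0 := by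
    intro i hi
    simp only [Finset.mem_insert, Finset.mem_singleton, not_or] at hi
    have h1 : i ≠ 0 := hi.1
    have h2 : (i:ℕ) ≠ N := fun h => hi.2 (Fin.ext h)
    have : A i 0 = 0 := by
      rw [hAapp]
      rw [if_neg h1, if_neg, sub_zero]
      have : (i:ℕ) < N := lt_of_le_of_ne (Nat.lt_succ_iff.mp i.isLt) h2
      rw [Nat.mod_eq_of_lt (by omega)]
      simp
    rw [this]; ring
  rw [← Finset.sum_subset (Finset.subset_univ ({0, Fin.last N} : Finset (Fin (N+1))))
      (fun x _ hx => hzero x hx)]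
  have hne : (0 : Fin (N+1)) ≠ Fin.last N := by
    intro h
    have := congrArg Fin.val h
    simp [Fin.last] at this
    omega
  rw [Finset.sum_pair hne]
  -- first minor : upper triangular with diagonal z
  have hM0 : det (A.submatrix (Fin.succAbove 0) Fin.succ) = z ^ N := by
    have htri : (A.submatrix (Fin.succAbove 0) Fin.succ).BlockTriangular id := by
      intro r c hlt
      simp only [Matrix.submatrix_apply, Fin.succAbove_zero] at *
      rw [hAapp]
      rw [if_neg (by simpa [Fin.ext_iff] using fun h => absurd (Fin.ext h : r = c) (ne_of_gt hlt))]
      rw [if_neg, sub_zero]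
      have hr : (r:ℕ) < N := r.isLt
      have hc : (c:ℕ) < N := c.isLt
      have hlt' : (c:ℕ) < (r:ℕ) := hlt
      simp only [Fin.val_succ]
      rcases Nat.lt_or_ge ((r:ℕ)+1+1) (N+1) with h | h
      · rw [Nat.mod_eq_of_lt h]; omega
      · rw [Nat.mod_eq_sub_mod (by omega), Nat.mod_eq_of_lt (by omega)]; omega
    rw [Matrix.det_of_upperTriangular htri]
    have : ∀ r : Fin N, (A.submatrix (Fin.succAbove 0) Fin.succ) r r = z := by
      intro r
      simp only [Matrix.submatrix_apply, Fin.succAbove_zero]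
      rw [hAapp, if_pos rfl]
      rw [if_neg, sub_zero]
      simp only [Fin.val_succ]
      rcases Nat.lt_or_ge ((r:ℕ)+1+1) (N+1) with h | h
      · rw [Nat.mod_eq_of_lt h]; omega
      · rw [Nat.mod_eq_sub_mod (by omega), Nat.mod_eq_of_lt (by omega)]
        have := r.isLt; omega
    rw [Finset.prod_congr rfl (fun r _ => this r), Finset.prod_const, Finset.card_univ,
      Fintype.card_fin]
  -- second minor : lower triangular with diagonal -1
  have hML : det (A.submatrix (Fin.last N).succAbove Fin.succ) = (-1) ^ N := by
    have htri : (A.submatrix (Fin.last N).succAbove Fin.succ).BlockTriangular OrderDual.toDual := by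
      intro r c hlt
      simp only [Matrix.submatrix_apply, Fin.succAbove_last] at *
      rw [hAapp]
      have hlt' : (r:ℕ) < (c:ℕ) := hlt
      rw [if_neg (by simp only [Fin.ext_iff, Fin.coe_castSucc, Fin.val_succ]; omega)]
      rw [if_neg, sub_zero]
      simp only [Fin.val_succ, Fin.coe_castSucc]
      rw [Nat.mod_eq_of_lt (by have := r.isLt; omega)]
      omega
    rw [Matrix.det_of_lowerTriangular _ htri]
    have : ∀ r : Fin N, (A.submatrix (Fin.last N).succAbove Fin.succ) r r = -1 := by
      intro r
      simp only [Matrix.submatrix_apply, Fin.succAbove_last]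
      rw [hAapp]
      rw [if_neg (by simp only [Fin.ext_iff, Fin.coe_castSucc, Fin.val_succ]; omega)]
      rw [if_pos, zero_sub]
      simp only [Fin.val_succ, Fin.coe_castSucc]
      rw [Nat.mod_eq_of_lt (by have := r.isLt; omega)]
    rw [Finset.prod_congr rfl (fun r _ => this r), Finset.prod_const, Finset.card_univ,
      Fintype.card_fin]
  have hA00 : A 0 0 = z := by
    rw [hAapp, if_pos rfl, if_neg, sub_zero]
    simp only [Fin.val_zero]
    rw [Nat.mod_eq_of_lt (by omega)]
    omega
  have hAl0 : A (Fin.last N) 0 = -1 := by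
    rw [hAapp]
    rw [if_neg (fun h => hne h.symm), if_pos, zero_sub]
    simp [Fin.last, Nat.mod_self]
  rw [hA00, hAl0, hM0, hML]
  simp [Fin.val_last]
  rw [← pow_add, ← two_mul, pow_mul]
  norm_num
  ring

lemma det_shiftS (N : ℕ) (hN : 1 ≤ N) (hE : Even (N+1)) :
    det (shiftS (N+1)) = -1 := by
  have h := det_zsub_shiftS N hN 0
  rw [zero_smul, zero_sub, Matrix.det_neg, Fintype.card_fin, hE.neg_one_pow, one_mul,
    zero_pow (by omega), zero_sub] at h
  exact h

lemma det_weighted (N : ℕ) (hN : 1 ≤ N) (hE : Even (N+1)) (u w : ℂ)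
    (hu : u ≠ 0) (hw : w ≠ 0) :
    det ((u + u⁻¹) • (1 : Matrix (Fin (N+1)) (Fin (N+1)) ℂ)
        - (w • shiftS (N+1) + w⁻¹ • (shiftS (N+1))ᵀ))
      = u^(N+1) + (u⁻¹)^(N+1) - w^(N+1) - (w⁻¹)^(N+1) := by
  set S := shiftS (N+1) with hS
  have h1 : Sᵀ * S = 1 := transpose_mul_shiftS (N+1)
  have key : ((u + u⁻¹) • (1 : Matrix (Fin (N+1)) (Fin (N+1)) ℂ) - (w • S + w⁻¹ • Sᵀ)) * S
      = (-w) • ((S - (u/w) • 1) * (S - (1/(u*w)) • 1)) := by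
    simp only [sub_mul, add_mul, Matrix.smul_mul, Matrix.mul_smul, Matrix.mul_sub,
      Matrix.sub_mul, Matrix.one_mul, Matrix.mul_one, smul_eq_mul, h1]
    match_scalars
    · field_simp; ring
    · ring
    · field_simp
  have hza : ∀ a : ℂ, det (S - a • (1 : Matrix (Fin (N+1)) (Fin (N+1)) ℂ)) = a^(N+1) - 1 := by
    intro a
    rw [show S - a • (1 : Matrix (Fin (N+1)) (Fin (N+1)) ℂ) = -(a • 1 - S) by rw [neg_sub],
      Matrix.det_neg, Fintype.card_fin, hE.neg_one_pow, one_mul, det_zsub_shiftS N hN a]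
  have hdS : det S = -1 := det_shiftS N hN hE
  have hdet := congrArg det key
  rw [Matrix.det_mul, Matrix.det_smul, Matrix.det_mul, hdS, hza, hza, Fintype.card_fin,
    hE.neg_pow] at hdet
  have h2 : det ((u + u⁻¹) • (1 : Matrix (Fin (N+1)) (Fin (N+1)) ℂ) - (w • S + w⁻¹ • Sᵀ))
      = -(w^(N+1) * ((u/w)^(N+1) - 1) * ((1/(u*w))^(N+1) - 1)) := by
    linear_combination -hdet
  rw [h2, div_pow, div_pow, one_pow, inv_pow, inv_pow, mul_pow]
  field_simp
  ring

section conj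
variable (n : ℕ) [NeZero n] (hn : 2 ≤ n) (α : Fin n → ℝ) (hα : ∑ j, α j = Real.pi)

noncomputable def aa : ℕ → ℝ := fun l => α ⟨l % n, Nat.mod_lt _ (Nat.pos_of_ne_zero (NeZero.ne n))⟩

noncomputable def th : ℕ → ℝ :=
  fun j => j * (Real.pi / n) - ∑ l ∈ Finset.range j, aa n α l

lemma aa_val (j : Fin n) : aa n α (j : ℕ) = α j := by
  simp only [aa]
  congr 1
  exact Fin.ext (Nat.mod_eq_of_lt j.isLt)

lemma th_step (hα : ∑ j, α j = Real.pi) (j k : Fin n) (hjk : (k : ℕ) = ((j : ℕ) + 1) % n) :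
    α j + th n α (k : ℕ) = th n α (j : ℕ) + Real.pi / n := by
  have hsum : ∑ l ∈ Finset.range n, aa n α l = Real.pi := by
    rw [← Fin.sum_univ_eq_sum_range]
    rw [← hα]
    exact Finset.sum_congr rfl fun j _ => aa_val n α j
  rcases Nat.lt_or_ge ((j : ℕ) + 1) n with h | h
  · -- no wrap
    rw [Nat.mod_eq_of_lt h] at hjk
    rw [hjk]
    simp only [th, Finset.sum_range_succ, aa_val n α j]
    push_cast
    ring
  · -- j = n - 1, k = 0
    have hj : (j : ℕ) = n - 1 := by have := j.isLt; omega
    have hk : (k : ℕ) = 0 := by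
      rw [hjk]
      have : (j : ℕ) + 1 = n := by omega
      rw [this, Nat.mod_self]
    rw [hk, hj]
    have hn1 : n - 1 + 1 = n := by omega
    have hsum' : ∑ l ∈ Finset.range (n-1), aa n α l = Real.pi - aa n α (n-1) := by
      have h2 : ∑ l ∈ Finset.range ((n-1)+1), aa n α l = Real.pi := by rw [hn1]; exact hsum
      rw [Finset.sum_range_succ] at h2
      linarith
    have haj : aa n α (n-1) = α j := by rw [← hj]; exact aa_val n α j
    simp only [th, hsum', haj, Finset.range_zero, Finset.sum_empty]
    have hcast : ((n - 1 : ℕ) : ℝ) = (n : ℝ) - 1 := by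
      push_cast [Nat.cast_sub (by omega : 1 ≤ n)]
      ring
    rw [hcast]
    have hnR : (n : ℝ) ≠ 0 := Nat.cast_ne_zero.mpr (by omega)
    push_cast
    field_simp
    ring
end conj

section conj2
variable (n : ℕ) [NeZero n] (α : Fin n → ℝ)

noncomputable def dd : Fin n → ℂ := fun j => Complex.exp ((th n α (j : ℕ) : ℝ) * Complex.I)

lemma conj_entry (hα : ∑ j, α j = Real.pi) (j k : Fin n) :
    cycleH n α j k * dd n α k =
      dd n α j * ((Complex.exp ((Real.pi / n : ℝ) * Complex.I) • shiftS n
        + (Complex.exp ((Real.pi / n : ℝ) * Complex.I))⁻¹ • (shiftS n)ᵀ) j k) := by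
  have hcond : ∀ a b : Fin n, ((b : ℕ) = ((a : ℕ) + 1) % n) ↔ b = a + 1 := by
    intro a b
    rw [Fin.ext_iff, fin_add_one_val]
  have hinv : (Complex.exp ((Real.pi / n : ℝ) * Complex.I))⁻¹
      = Complex.exp (-((Real.pi / n : ℝ) * Complex.I)) := by
    rw [← Complex.exp_neg]
  simp only [cycleH, Matrix.add_apply, Matrix.smul_apply, Matrix.transpose_apply, shiftS,
    smul_eq_mul, hinv, add_mul, mul_add, mul_ite, ite_mul, zero_mul, mul_zero]
  congr 1
  · -- c1 term
    by_cases h : (k : ℕ) = ((j : ℕ) + 1) % n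
    · rw [if_pos h, if_pos ((hcond j k).mp h)]
      rw [dd, dd, mul_one, ← Complex.exp_add, ← Complex.exp_add]
      congr 1
      have := th_step n α hα j k h
      have h' := congrArg Complex.ofReal this
      push_cast at h'
      push_cast
      linear_combination Complex.I * h'
    · rw [if_neg h, if_neg (fun hc => h ((hcond j k).mpr hc))]
  · -- c2 term
    by_cases h : (j : ℕ) = ((k : ℕ) + 1) % n
    · rw [if_pos h, if_pos ((hcond k j).mp h)]
      rw [dd, dd, mul_one, ← Complex.exp_add, ← Complex.exp_add]
      congr 1
      have := th_step n α hα k j h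
      have h' := congrArg Complex.ofReal this
      push_cast at h'
      push_cast
      linear_combination -Complex.I * h'
    · rw [if_neg h, if_neg (fun hc => h ((hcond k j).mpr hc))]

lemma conj_det (hα : ∑ j, α j = Real.pi) (x : ℂ) :
    det (x • (1 : Matrix (Fin n) (Fin n) ℂ) - cycleH n α)
      = det (x • (1 : Matrix (Fin n) (Fin n) ℂ)
          - (Complex.exp ((Real.pi / n : ℝ) * Complex.I) • shiftS n
            + (Complex.exp ((Real.pi / n : ℝ) * Complex.I))⁻¹ • (shiftS n)ᵀ)) := by
  set W := Complex.exp ((Real.pi / n : ℝ) * Complex.I) • shiftS n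
    + (Complex.exp ((Real.pi / n : ℝ) * Complex.I))⁻¹ • (shiftS n)ᵀ with hW
  set D : Matrix (Fin n) (Fin n) ℂ := Matrix.diagonal (dd n α) with hD
  have hcomm : cycleH n α * D = D * W := by
    ext j k
    rw [hD, Matrix.mul_diagonal, Matrix.diagonal_mul]
    exact conj_entry n α hα j k
  have hmain : (x • (1 : Matrix (Fin n) (Fin n) ℂ) - cycleH n α) * D
      = D * (x • (1 : Matrix (Fin n) (Fin n) ℂ) - W) := by
    rw [Matrix.sub_mul, Matrix.mul_sub, hcomm, Matrix.smul_mul, Matrix.mul_smul,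
      Matrix.one_mul, Matrix.mul_one]
  have hdet := congrArg det hmain
  rw [Matrix.det_mul, Matrix.det_mul] at hdet
  have hDdet : det D ≠ 0 := by
    rw [hD, Matrix.det_diagonal]
    exact Finset.prod_ne_zero_iff.mpr fun j _ => Complex.exp_ne_zero _
  refine mul_left_cancel₀ hDdet ?_
  rw [mul_comm]
  exact hdet
end conj2


lemma det_weighted' (n : ℕ) [NeZero n] (hE : Even n) (u w : ℂ)
    (hu : u ≠ 0) (hw : w ≠ 0) :
    Matrix.det ((u + u⁻¹) • (1 : Matrix (Fin n) (Fin n) ℂ)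
        - (w • shiftS n + w⁻¹ • (shiftS n)ᵀ))
      = u ^ n + (u⁻¹) ^ n - w ^ n - (w⁻¹) ^ n := by
  cases n with
  | zero => exact absurd rfl (NeZero.ne 0)
  | succ N =>
    cases N with
    | zero => simp at hE
    | succ N' => exact det_weighted (N' + 1) (by omega) hE u w hu hw

lemma cycleAdj_decomp (n : ℕ) [NeZero n] :
    cycleAdj n = (1 : ℂ) • shiftS n + ((1 : ℂ))⁻¹ • (shiftS n)ᵀ := by
  ext j k
  have hcond : ∀ a b : Fin n, ((b : ℕ) = ((a : ℕ) + 1) % n) ↔ b = a + 1 := by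
    intro a b
    rw [Fin.ext_iff, fin_add_one_val]
  simp only [cycleAdj, Matrix.add_apply, Matrix.smul_apply, Matrix.transpose_apply, shiftS,
    smul_eq_mul, inv_one, one_mul, hcond j k, hcond k j]

/-- If the weights of an oriented even cycle `C_{2m}` satisfy `∑ α j = π` (i.e. the product
of the weights around the cycle is `-1`), then the characteristic polynomial of the
Hermitian adjacency matrix equals that of the undirected cycle plus the constant `4`. -/
theorem charpoly_oriented_even_cycle (m : ℕ) (hm : 2 ≤ m) (α : Fin (2 * m) → ℝ)
    (hα : ∑ j, α j = Real.pi) :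
    (cycleH (2 * m) α).charpoly = (cycleAdj (2 * m)).charpoly + 4 := by
  haveI : NeZero (2 * m) := ⟨by omega⟩
  apply Polynomial.funext
  intro x
  obtain ⟨u, hu0, hux⟩ := exists_u x
  set w : ℂ := Complex.exp ((Real.pi / (2 * m : ℕ) : ℝ) * Complex.I) with hw
  have hw0 : w ≠ 0 := Complex.exp_ne_zero _
  have hwn : w ^ (2 * m) = -1 := by
    rw [hw, ← Complex.exp_nat_mul]
    have hcoef : ((2 * m : ℕ) : ℂ) * (((Real.pi / (2 * m : ℕ) : ℝ) : ℂ) * Complex.I)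
        = (Real.pi : ℂ) * Complex.I := by
      have hne : ((2 * m : ℕ) : ℂ) ≠ 0 := Nat.cast_ne_zero.mpr (by omega)
      push_cast
      push_cast at hne
      field_simp
      exact div_self (Nat.cast_ne_zero.mpr (by omega))
    rw [hcoef, Complex.exp_pi_mul_I]
  have hwni : (w⁻¹) ^ (2 * m) = -1 := by
    rw [inv_pow, hwn]
    norm_num
  rw [Polynomial.eval_add, eval_charpoly', eval_charpoly', conj_det (2 * m) α hα x,
    cycleAdj_decomp (2 * m), ← hux,
    det_weighted' (2 * m) (even_two_mul m) u w hu0 hw0,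
    det_weighted' (2 * m) (even_two_mul m) u 1 hu0 one_ne_zero,
    hwn, hwni, one_pow, inv_one, one_pow]
  simp only [Polynomial.eval_ofNat]
  ring
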